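/- Let n, m be positive natural numbers and let H be a hybrid quantum–classical Hamiltonian on the composite space indexed by Fin n × Fin m, i.e. H = (Matrix.diagonal ε ⊗ₖ 1) + (1 ⊗ₖ H_Q) + ∑ i : Fin n, (γ i : ℂ) • (Matrix.stdBasisMatrix i i 1 ⊗ₖ S i), where ε, γ : Fin n → ℝ, and H_Q and each S i are m×m complex matrices. Then for every o : Fin n → ℝ, the classical observable O_C = Matrix.diagonal o ⊗ₖ 1 commutes with H: (Matrix.diagonal o ⊗ₖ 1) * H = H * (Matrix.diagonal o ⊗ₖ 1). (Theorem 1: in Hamiltonian quantum–classical hybrid dynamics there is no backreaction from the quantum sector to the classical sector — every classical observable is conserved.) -/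

import Mathlib

open Matrix Kronecker

lemma diag_comm_std {n : ℕ} (d : Fin n → ℂ) (i : Fin n) :
    Matrix.diagonal d * Matrix.single i i (1 : ℂ)
      = Matrix.single i i (1 : ℂ) * Matrix.diagonal d := by
  ext a b
  simp [Matrix.mul_apply, Matrix.diagonal, Matrix.single, Finset.sum_ite_eq,
    Finset.sum_ite_eq', ite_and]
  aesop

/-- Theorem 1: in Hamiltonian quantum–classical hybrid dynamics there is no
backreaction from the quantum sector to the classical sector — every classical
observable commutes with the hybrid Hamiltonian. -/
theorem classical_observable_commutes_with_hybrid_hamiltonian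
    (n m : ℕ) (hn : 0 < n) (hm : 0 < m)
    (ε γ : Fin n → ℝ)
    (H_Q : Matrix (Fin m) (Fin m) ℂ)
    (S : Fin n → Matrix (Fin m) (Fin m) ℂ)
    (H : Matrix (Fin n × Fin m) (Fin n × Fin m) ℂ)
    (hH : H = (Matrix.diagonal (fun i => (ε i : ℂ)) ⊗ₖ 1)
        + ((1 : Matrix (Fin n) (Fin n) ℂ) ⊗ₖ H_Q)
        + ∑ i : Fin n, (γ i : ℂ) • (Matrix.single i i 1 ⊗ₖ S i))
    (o : Fin n → ℝ) :
    (Matrix.diagonal (fun i => (o i : ℂ)) ⊗ₖ (1 : Matrix (Fin m) (Fin m) ℂ)) * H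
      = H * (Matrix.diagonal (fun i => (o i : ℂ)) ⊗ₖ (1 : Matrix (Fin m) (Fin m) ℂ)) := by
  subst hH
  simp only [Matrix.mul_add, Matrix.add_mul, Matrix.mul_sum, Matrix.sum_mul,
    Matrix.mul_smul, Matrix.smul_mul, ← Matrix.mul_kronecker_mul,
    Matrix.one_mul, Matrix.mul_one, Matrix.diagonal_mul_diagonal,
    diag_comm_std]
  simp [mul_comm]
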